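/- Suppose the feature covariance Σ(φ) is invertible. Let λ_1 ≤ λ_2 ≤ … ≤ λ_D be the eigenvalues of I_D − Σ(φ)^{−1/2} Σ(φ̄) Σ(φ)^{−1/2} in increasing order, and let γ_1 ≥ γ_2 ≥ … ≥ γ_D be the D largest squared singular values of P_{Φ_n} Ā_nᵀ in decreasing order (this matrix has rank at most D). Then λ_i = 1 − γ_i for every i ∈ {1,…,D}. -/

import Mathlib

open Matrix Finset

variable {Xb X : Type*} [Fintype Xb] [Fintype X] [DecidableEq Xb] [DecidableEq X]

/-- Marginal probability `w(x) = ∑_{x̄} w(x̄)·w(x|x̄)` of an augmentation. -/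
noncomputable def wX (wb : Xb → ℝ) (wc : Xb → X → ℝ) (x : X) : ℝ := ∑ xb, wb xb * wc xb x

/-- Input–augmentation joint matrix `Ā[x̄,x] = w(x̄,x)`. -/
noncomputable def Abar (wb : Xb → ℝ) (wc : Xb → X → ℝ) : Matrix Xb X ℝ :=
  Matrix.of fun xb x => wb xb * wc xb x

/-- Normalized input–augmentation matrix `Ā_n = D̄^{-1/2} Ā D^{-1/2}`. -/
noncomputable def AbarN (wb : Xb → ℝ) (wc : Xb → X → ℝ) : Matrix Xb X ℝ :=
  (Matrix.diagonal fun xb => (Real.sqrt (wb xb))⁻¹) * Abar wb wc *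
    (Matrix.diagonal fun x => (Real.sqrt (wX wb wc x))⁻¹)

/-- Similarity matrix `A[x,x'] = w(x,x')`. -/
noncomputable def Amat (wb : Xb → ℝ) (wc : Xb → X → ℝ) : Matrix X X ℝ :=
  Matrix.of fun x x' => ∑ xb, wb xb * wc xb x * wc xb x'

/-- Normalized similarity matrix `A_n = D^{-1/2} A D^{-1/2}`. -/
noncomputable def AN (wb : Xb → ℝ) (wc : Xb → X → ℝ) : Matrix X X ℝ :=
  (Matrix.diagonal fun x => (Real.sqrt (wX wb wc x))⁻¹) * Amat wb wc *
    (Matrix.diagonal fun x => (Real.sqrt (wX wb wc x))⁻¹)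

/-- Normalized matrix of a map `f` w.r.t. weights `w`: rows `√(w x) · f x`. -/
noncomputable def Nmat {ι : Type*} (w : X → ℝ) (f : X → ι → ℝ) : Matrix X ι ℝ :=
  Matrix.of fun x i => Real.sqrt (w x) * f x i

/-- `P` is the orthogonal projection onto the column space of `B`. -/
def IsProjOnto {n m : Type*} [Fintype n] [Fintype m]
    (P : Matrix n n ℝ) (B : Matrix n m ℝ) : Prop :=
  P.IsSymm ∧ P * P = P ∧ LinearMap.range P.mulVecLin = LinearMap.range B.mulVecLin

/-- Squared Frobenius norm. -/
noncomputable def frobSq {n m : Type*} [Fintype n] [Fintype m] (M : Matrix n m ℝ) : ℝ :=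
  ∑ i, ∑ j, M i j ^ 2

/-- Spectral contrastive loss. -/
noncomputable def Lspec {d : ℕ} (wb : Xb → ℝ) (wc : Xb → X → ℝ) (f : X → Fin d → ℝ) : ℝ :=
  -2 * ∑ x, ∑ x', (∑ xb, wb xb * wc xb x * wc xb x') * (∑ i, f x i * f x' i)
    + ∑ x, ∑ x', wX wb wc x * wX wb wc x' * (∑ i, f x i * f x' i) ^ 2

/-- Augmentation-averaged representation `f̄(x̄) = ∑_x w(x|x̄) f(x)`. -/
noncomputable def fbar {ι : Type*} (wc : Xb → X → ℝ) (f : X → ι → ℝ) (xb : Xb) (i : ι) : ℝ :=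
  ∑ x, wc xb x * f x i

/-- Downstream classification loss. -/
noncomputable def Lclf {d : ℕ} (wb : Xb → ℝ) (wc : Xb → X → ℝ) (f : X → Fin d → ℝ)
    (ystar : Xb → ℝ) : ℝ :=
  ⨅ v : Fin d → ℝ,
    ∑ xb, wb xb * (if ystar xb * (∑ i, v i * fbar wc f xb i) < 0 then (1 : ℝ) else 0)

/-- Regression loss of features `φ` on a target `g` over augmentations. -/
noncomputable def LregPhi {ι : Type*} [Fintype ι] (w : X → ℝ) (φ : X → ι → ℝ) (g : X → ℝ) : ℝ :=
  ⨅ v : ι → ℝ, ∑ x, w x * ((∑ i, v i * φ x i) - g x) ^ 2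

/-- Inconsistency `Δ(g, y*)`. -/
noncomputable def Delta (wb : Xb → ℝ) (wc : Xb → X → ℝ) (g : X → ℝ) (ystar : Xb → ℝ) : ℝ :=
  ∑ xb, wb xb * ∑ x, wc xb x * (if g x ≠ ystar xb then (1 : ℝ) else 0)

/-- Feature covariance `Σ(φ) = ∑_x w(x)·φ(x)φ(x)ᵀ`. -/
noncomputable def SigmaPhi {ι : Type*} [Fintype ι] (w : X → ℝ) (φ : X → ι → ℝ) :
    Matrix ι ι ℝ :=
  Matrix.of fun i j => ∑ x, w x * φ x i * φ x j

/-- Averaged-feature covariance `Σ(φ̄) = ∑_{x̄} w(x̄)·φ̄(x̄)φ̄(x̄)ᵀ`. -/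
noncomputable def SigmaBar {ι : Type*} [Fintype ι] (wb : Xb → ℝ) (wc : Xb → X → ℝ)
    (φ : X → ι → ℝ) : Matrix ι ι ℝ :=
  Matrix.of fun i j => ∑ xb, wb xb * fbar wc φ xb i * fbar wc φ xb j

section MyAuxLemmas

section Aux
variable {n m : Type*} [Fintype n] [Fintype m] [DecidableEq n] [DecidableEq m]

lemma my_charmatrix_eq (M : Matrix n n ℝ) :
    charmatrix M = (Polynomial.X : (Polynomial ℝ)) • (1 : Matrix n n (Polynomial ℝ)) - M.map Polynomial.C := by
  rw [charmatrix, scalar_apply, ← smul_one_eq_diagonal]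
  rfl

lemma my_eq_of_mulVec_eq {A B : Matrix n m ℝ} (h : ∀ v, A *ᵥ v = B *ᵥ v) : A = B := by
  ext i j
  have := congrFun (h (Pi.single j 1)) i
  simpa using this

lemma my_charpoly_diagonal (d : n → ℝ) :
    (Matrix.diagonal d).charpoly = ∏ i, (Polynomial.X - Polynomial.C (d i)) := by
  have : charmatrix (Matrix.diagonal d) = Matrix.diagonal fun i => Polynomial.X - Polynomial.C (d i) := by
    ext i j
    by_cases h : i = j
    · subst h; simp
    · simp [h, Matrix.diagonal_apply_ne _ h]
  rw [charpoly, this, det_diagonal]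

lemma my_charpoly_mul_comm_rect (A : Matrix n m ℝ) (B : Matrix m n ℝ) :
    (A * B).charpoly * Polynomial.X ^ (Fintype.card m) = (B * A).charpoly * Polynomial.X ^ (Fintype.card n) := by
  set A' := A.map (Polynomial.C : ℝ →+* (Polynomial ℝ)) with hA'
  set B' := B.map (Polynomial.C : ℝ →+* (Polynomial ℝ)) with hB'
  have hAB : A' * B' = (A * B).map (Polynomial.C : ℝ →+* (Polynomial ℝ)) := (Matrix.map_mul).symm
  have hBA : B' * A' = (B * A).map (Polynomial.C : ℝ →+* (Polynomial ℝ)) := (Matrix.map_mul).symm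
  have e1 : fromBlocks (1 : Matrix n n (Polynomial ℝ)) A' 0 ((Polynomial.X : (Polynomial ℝ)) • 1) *
      fromBlocks (charmatrix (A*B)) 0 B' (1 : Matrix m m (Polynomial ℝ))
      = fromBlocks ((Polynomial.X : (Polynomial ℝ)) • 1) A' ((Polynomial.X : (Polynomial ℝ)) • B') ((Polynomial.X : (Polynomial ℝ)) • 1) := by
    rw [fromBlocks_multiply, my_charmatrix_eq, hAB]
    simp [Matrix.smul_mul, sub_add_cancel]
  have e2 : fromBlocks (1 : Matrix n n (Polynomial ℝ)) 0 B' (1 : Matrix m m (Polynomial ℝ)) *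
      fromBlocks ((Polynomial.X : (Polynomial ℝ)) • 1) A' 0 (charmatrix (B*A))
      = fromBlocks ((Polynomial.X : (Polynomial ℝ)) • 1) A' ((Polynomial.X : (Polynomial ℝ)) • B') ((Polynomial.X : (Polynomial ℝ)) • 1) := by
    rw [fromBlocks_multiply, my_charmatrix_eq, hBA]
    simp [Matrix.mul_smul]
  have := congrArg Matrix.det (e1.trans e2.symm)
  rw [det_mul, det_mul, det_fromBlocks_zero₂₁, det_fromBlocks_zero₁₂,
    det_fromBlocks_zero₂₁, det_fromBlocks_zero₁₂] at this
  simp only [det_one, one_mul, mul_one] at this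
  have hdn : Matrix.det ((Polynomial.X : (Polynomial ℝ)) • (1 : Matrix n n (Polynomial ℝ))) = Polynomial.X ^ (Fintype.card n) := by
    rw [det_smul, det_one, mul_one]
  have hdm : Matrix.det ((Polynomial.X : (Polynomial ℝ)) • (1 : Matrix m m (Polynomial ℝ))) = Polynomial.X ^ (Fintype.card m) := by
    rw [det_smul, det_one, mul_one]
  rw [hdn, hdm] at this
  rw [charpoly, charpoly]
  linear_combination this

end Aux
section Aux2
open List
variable {X : Type*} [Fintype X] [DecidableEq X]

lemma my_sum_Icc_one {M : Type*} [AddCommMonoid M] (k : ℕ) (f : ℕ → M) :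
    ∑ i ∈ Finset.Icc 1 k, f i = ∑ b : Fin k, f (b.1 + 1) := by
  rw [← Finset.Ico_add_one_right_eq_Icc, Finset.sum_Ico_eq_sum_range]
  have h1 : ∑ b : Fin k, f (b.1 + 1) = ∑ i ∈ Finset.range k, f (i + 1) :=
    Fin.sum_univ_eq_sum_range (fun i => f (i + 1)) k
  rw [h1]
  have h2 : k + 1 - 1 = k := by omega
  rw [h2]
  exact Finset.sum_congr rfl fun i _ => by rw [add_comm]
end Aux2

section Aux3

lemma my_getElem_pad {n m : ℕ} (f : Fin n → ℝ) (j : ℕ) (hj : j < n + m) :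
    (((List.finRange n).map f) ++ List.replicate m (0:ℝ))[j]'(by simp; omega)
      = if h : j < n then f ⟨j, h⟩ else 0 := by
  by_cases h : j < n
  · rw [dif_pos h, List.getElem_append_left (by simpa using h), List.getElem_map,
      List.getElem_finRange]
    congr 1
  · rw [dif_neg h, List.getElem_append_right (by simpa using not_lt.mp h),
      List.getElem_replicate]

lemma my_prod_pad (nn mm : ℕ) (f : Fin nn → ℝ) :
    ((((List.finRange nn).map f ++ List.replicate mm 0 : List ℝ) : Multiset ℝ).map
      (fun a => Polynomial.X - Polynomial.C a)).prod = (∏ b : Fin nn, (Polynomial.X - Polynomial.C (f b))) * Polynomial.X ^ mm := by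
  rw [Multiset.map_coe, Multiset.prod_coe, List.map_append, List.prod_append, List.map_map,
    List.map_replicate, List.prod_replicate, map_zero, sub_zero]
  congr 1
end Aux3

end MyAuxLemmas

/-- if `Σ(φ)` is invertible, the increasing eigenvalues `λ_i` of
`I_D − Σ(φ)^{-1/2} Σ(φ̄) Σ(φ)^{-1/2}` and the decreasing squared singular values `γ_i`
of `P_{Φ_n} Ā_nᵀ` satisfy `λ_i = 1 − γ_i` for `i ∈ {1,…,D}`.
Here `R` is a symmetric square root of `Σ(φ)⁻¹`, the `γ` are given via a singular value
decomposition of `P Ā_nᵀ` (padded by zeros), and the `λ` via an orthonormal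
eigendecomposition. -/
theorem eigenvalues_eq_one_sub_singular {D : ℕ} [Nonempty Xb] [Nonempty X]
    (wb : Xb → ℝ) (wc : Xb → X → ℝ)
    (hwb : ∀ xb, 0 < wb xb) (hwbsum : ∑ xb, wb xb = 1)
    (hwc : ∀ xb x, 0 ≤ wc xb x) (hwcsum : ∀ xb, ∑ x, wc xb x = 1)
    (hwx : ∀ x, 0 < wX wb wc x)
    (φ : X → Fin D → ℝ) (hSigma : IsUnit (SigmaPhi (wX wb wc) φ))
    (R : Matrix (Fin D) (Fin D) ℝ) (hR : R.IsSymm)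
    (hRR : R * R = (SigmaPhi (wX wb wc) φ)⁻¹)
    (P : Matrix X X ℝ) (hP : IsProjOnto P (Nmat (wX wb wc) φ))
    (γ : ℕ → ℝ) (u : ℕ → X → ℝ) (v : ℕ → Xb → ℝ)
    (hγnonneg : ∀ i, 0 ≤ γ i)
    (hγmono : ∀ i j, 1 ≤ i → i ≤ j → γ j ≤ γ i)
    (hγpad : ∀ i, min (Fintype.card X) (Fintype.card Xb) < i → γ i = 0)
    (hu : ∀ i ∈ Finset.Icc 1 (min (Fintype.card X) (Fintype.card Xb)),
        ∀ j ∈ Finset.Icc 1 (min (Fintype.card X) (Fintype.card Xb)),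
        ∑ x, u i x * u j x = if i = j then (1 : ℝ) else 0)
    (hv : ∀ i ∈ Finset.Icc 1 (Fintype.card Xb), ∀ j ∈ Finset.Icc 1 (Fintype.card Xb),
        ∑ xb, v i xb * v j xb = if i = j then (1 : ℝ) else 0)
    (hsvd : ∀ x xb, (P * (AbarN wb wc)ᵀ) x xb
        = ∑ i ∈ Finset.Icc 1 (min (Fintype.card X) (Fintype.card Xb)),
            Real.sqrt (γ i) * u i x * v i xb)
    (lam : ℕ → ℝ) (e : ℕ → Fin D → ℝ)
    (he : ∀ i ∈ Finset.Icc 1 D, ∀ j ∈ Finset.Icc 1 D,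
        ∑ a, e i a * e j a = if i = j then (1 : ℝ) else 0)
    (heig : ∀ i ∈ Finset.Icc 1 D,
        (1 - R * SigmaBar wb wc φ * R).mulVec (e i) = lam i • e i)
    (hlammono : ∀ i j, 1 ≤ i → i ≤ j → j ≤ D → lam i ≤ lam j) :
    ∀ i ∈ Finset.Icc 1 D, lam i = 1 - γ i := by
  classical
  have hXcard : min (Fintype.card X) (Fintype.card Xb) ≤ Fintype.card Xb := min_le_right _ _
  set k : ℕ := min (Fintype.card X) (Fintype.card Xb) with hk
  set Φ : Matrix X (Fin D) ℝ := Nmat (wX wb wc) φ with hΦdef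
  set Φb : Matrix Xb (Fin D) ℝ := Nmat wb (fbar wc φ) with hΦbdef
  set Sgm : Matrix (Fin D) (Fin D) ℝ := SigmaPhi (wX wb wc) φ with hSgmdef
  set Sgb : Matrix (Fin D) (Fin D) ℝ := SigmaBar wb wc φ with hSgbdef
  -- covariances as Gram matrices
  have hSgmeq : Sgm = Φᵀ * Φ := by
    ext i j
    rw [Matrix.mul_apply]
    simp only [hSgmdef, hΦdef, SigmaPhi, Nmat, Matrix.transpose_apply, Matrix.of_apply]
    refine Finset.sum_congr rfl fun x _ => ?_
    have h := Real.mul_self_sqrt (hwx x).le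
    calc wX wb wc x * φ x i * φ x j
        = (Real.sqrt (wX wb wc x) * Real.sqrt (wX wb wc x)) * (φ x i * φ x j) := by rw [h]; ring
      _ = Real.sqrt (wX wb wc x) * φ x i * (Real.sqrt (wX wb wc x) * φ x j) := by ring
  have hSgbeq : Sgb = Φbᵀ * Φb := by
    ext i j
    rw [Matrix.mul_apply]
    simp only [hSgbdef, hΦbdef, SigmaBar, Nmat, Matrix.transpose_apply, Matrix.of_apply]
    refine Finset.sum_congr rfl fun xb _ => ?_
    have h := Real.mul_self_sqrt (hwb xb).le
    calc wb xb * fbar wc φ xb i * fbar wc φ xb j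
        = (Real.sqrt (wb xb) * Real.sqrt (wb xb)) * (fbar wc φ xb i * fbar wc φ xb j) := by
          rw [h]; ring
      _ = Real.sqrt (wb xb) * fbar wc φ xb i * (Real.sqrt (wb xb) * fbar wc φ xb j) := by ring
  -- A_n Φ = Φ̄
  have hAΦ : AbarN wb wc * Φ = Φb := by
    ext xb i
    rw [Matrix.mul_apply]
    have hterm : ∀ x, AbarN wb wc xb x * Φ x i
        = Real.sqrt (wb xb) * (wc xb x * φ x i) := by
      intro x
      have h1 : Real.sqrt (wX wb wc x) ≠ 0 := ne_of_gt (Real.sqrt_pos.mpr (hwx x))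
      have h3 : Real.sqrt (wb xb) ≠ 0 := ne_of_gt (Real.sqrt_pos.mpr (hwb xb))
      have hAe : AbarN wb wc xb x
          = (Real.sqrt (wb xb))⁻¹ * (wb xb * wc xb x) * (Real.sqrt (wX wb wc x))⁻¹ := by
        simp [AbarN, Abar, Matrix.mul_apply, Matrix.diagonal, Matrix.mul_diagonal,
          Matrix.diagonal_mul]
      rw [hAe]
      simp only [hΦdef, Nmat, Matrix.of_apply]
      have h4 : (Real.sqrt (wb xb))⁻¹ * wb xb = Real.sqrt (wb xb) := by
        rw [inv_mul_eq_iff_eq_mul₀ h3]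
        exact (Real.mul_self_sqrt (hwb xb).le).symm
      calc (Real.sqrt (wb xb))⁻¹ * (wb xb * wc xb x) * (Real.sqrt (wX wb wc x))⁻¹ *
            (Real.sqrt (wX wb wc x) * φ x i)
          = ((Real.sqrt (wb xb))⁻¹ * wb xb) * ((Real.sqrt (wX wb wc x))⁻¹ *
              Real.sqrt (wX wb wc x)) * (wc xb x * φ x i) := by ring
        _ = Real.sqrt (wb xb) * (wc xb x * φ x i) := by
            rw [inv_mul_cancel₀ h1, h4, mul_one]
    rw [Finset.sum_congr rfl fun x _ => hterm x, ← Finset.mul_sum]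
    simp [hΦbdef, Nmat, fbar]
  -- P is the explicit projection
  have hdet : IsUnit Sgm.det := (Matrix.isUnit_iff_isUnit_det Sgm).mp hSigma
  have hinvmul : Sgm⁻¹ * Sgm = 1 := Matrix.nonsing_inv_mul Sgm hdet
  have hmulinv : Sgm * Sgm⁻¹ = 1 := Matrix.mul_nonsing_inv Sgm hdet
  obtain ⟨hPsymm, hPidem, hPrange⟩ := hP
  have hP0Φ : (Φ * Sgm⁻¹ * Φᵀ) * Φ = Φ := by
    rw [Matrix.mul_assoc, Matrix.mul_assoc, ← hSgmeq, hinvmul, Matrix.mul_one]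
  have hPP0 : P * (Φ * Sgm⁻¹ * Φᵀ) = Φ * Sgm⁻¹ * Φᵀ := by
    apply my_eq_of_mulVec_eq
    intro vv
    rw [← Matrix.mulVec_mulVec]
    have hmem : (Φ * Sgm⁻¹ * Φᵀ) *ᵥ vv ∈ LinearMap.range P.mulVecLin := by
      rw [hPrange]
      exact ⟨(Sgm⁻¹ * Φᵀ) *ᵥ vv, by
        rw [Matrix.mulVecLin_apply, Matrix.mulVec_mulVec, ← Matrix.mul_assoc]⟩
    obtain ⟨z, hz⟩ := hmem
    rw [Matrix.mulVecLin_apply] at hz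
    rw [← hz, Matrix.mulVec_mulVec, hPidem]
  have hP0P : (Φ * Sgm⁻¹ * Φᵀ) * P = P := by
    apply my_eq_of_mulVec_eq
    intro vv
    rw [← Matrix.mulVec_mulVec]
    have hmem : P *ᵥ vv ∈ LinearMap.range Φ.mulVecLin := by
      rw [← hPrange]
      exact ⟨vv, by rw [Matrix.mulVecLin_apply]⟩
    obtain ⟨z, hz⟩ := hmem
    rw [Matrix.mulVecLin_apply] at hz
    rw [← hz, Matrix.mulVec_mulVec, hP0Φ]
  have hP0symm : (Φ * Sgm⁻¹ * Φᵀ)ᵀ = Φ * Sgm⁻¹ * Φᵀ := by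
    rw [← hRR]
    simp only [Matrix.transpose_mul, Matrix.transpose_transpose, hR.eq, Matrix.mul_assoc]
  have hPeq : P = Φ * Sgm⁻¹ * Φᵀ := by
    have h1 : P = Pᵀ := hPsymm.symm
    calc P = (Φ * Sgm⁻¹ * Φᵀ) * P := hP0P.symm
      _ = ((Φ * Sgm⁻¹ * Φᵀ) * P)ᵀᵀ := by rw [Matrix.transpose_transpose]
      _ = (Pᵀ * (Φ * Sgm⁻¹ * Φᵀ)ᵀ)ᵀ := by rw [Matrix.transpose_mul]
      _ = (P * (Φ * Sgm⁻¹ * Φᵀ))ᵀ := by rw [← h1, hP0symm]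
      _ = (Φ * Sgm⁻¹ * Φᵀ)ᵀ := by rw [hPP0]
      _ = Φ * Sgm⁻¹ * Φᵀ := hP0symm
  have hPA : P * (AbarN wb wc)ᵀ = Φ * Sgm⁻¹ * Φbᵀ := by
    rw [hPeq, Matrix.mul_assoc, Matrix.mul_assoc, ← Matrix.transpose_mul, hAΦ,
      ← Matrix.mul_assoc]
  -- eigenvector matrix
  set Em : Matrix (Fin D) (Fin D) ℝ := Matrix.of (fun a b => e (b.1 + 1) a) with hEmdef
  set Lam : Fin D → ℝ := (fun b => 1 - lam (b.1 + 1)) with hLamdef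
  have hmemD : ∀ b : Fin D, b.1 + 1 ∈ Finset.Icc 1 D := by
    intro b
    simp only [Finset.mem_Icc]
    exact ⟨Nat.le_add_left 1 b.1, b.isLt⟩
  have hEE : Emᵀ * Em = 1 := by
    ext b b'
    rw [Matrix.mul_apply]
    simp only [hEmdef, Matrix.transpose_apply, Matrix.of_apply]
    rw [he (b.1 + 1) (hmemD b) (b'.1 + 1) (hmemD b')]
    by_cases h : b = b'
    · subst h; simp [Matrix.one_apply]
    · have : ¬ (b.1 + 1 = b'.1 + 1) := by
        simp only [add_left_inj]
        exact fun hc => h (Fin.ext hc)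
      simp [Matrix.one_apply, h, this, Fin.val_inj]
  have hEEt : Em * Emᵀ = 1 := mul_eq_one_comm.mp hEE
  have hMe : ∀ i ∈ Finset.Icc 1 D, (R * Sgb * R) *ᵥ e i = (1 - lam i) • e i := by
    intro i hi
    have h := heig i hi
    rw [Matrix.sub_mulVec, Matrix.one_mulVec] at h
    have h2 : (R * Sgb * R) *ᵥ e i = e i - lam i • e i := by
      rw [← h]; abel
    rw [h2, sub_smul, one_smul]
  have hMm : R * Sgb * R = Em * Matrix.diagonal Lam * Emᵀ := by
    have hME : (R * Sgb * R) * Em = Em * Matrix.diagonal Lam := by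
      ext a b
      have h := congrFun (hMe (b.1 + 1) (hmemD b)) a
      rw [Matrix.mul_apply, Matrix.mul_diagonal]
      simp only [Matrix.mulVec, dotProduct, Pi.smul_apply, smul_eq_mul] at h
      simp only [hEmdef, hLamdef, Matrix.of_apply]
      rw [h]
      ring
    calc R * Sgb * R = (R * Sgb * R) * (Em * Emᵀ) := by rw [hEEt, Matrix.mul_one]
      _ = ((R * Sgb * R) * Em) * Emᵀ := (Matrix.mul_assoc _ _ _).symm
      _ = Em * Matrix.diagonal Lam * Emᵀ := by rw [hME]
  -- R Σ R = 1
  have hRSR : R * Sgm * R = 1 := by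
    have h1 : R * (R * Sgm) = 1 := by
      rw [← Matrix.mul_assoc, hRR, hinvmul]
    exact mul_eq_one_comm.mp h1
  -- helper rewrites with trailing factor
  have hSgb' : ∀ Z : Matrix (Fin D) X ℝ, Φbᵀ * (Φb * Z) = Sgb * Z := by
    intro Z
    rw [← Matrix.mul_assoc, ← hSgbeq]
  have hMm' : ∀ Z : Matrix (Fin D) X ℝ,
      Em * (Matrix.diagonal Lam * (Emᵀ * Z)) = R * (Sgb * (R * Z)) := by
    intro Z
    have h := congrArg (fun M => M * Z) hMm
    simpa only [Matrix.mul_assoc] using h.symm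
  -- the Gram matrix of P Āᵀ, two ways
  have hs1 : (P * (AbarN wb wc)ᵀ) * (P * (AbarN wb wc)ᵀ)ᵀ
      = (Φ * R * Em) * Matrix.diagonal Lam * (Φ * R * Em)ᵀ := by
    have hA : (P * (AbarN wb wc)ᵀ) * (P * (AbarN wb wc)ᵀ)ᵀ
        = Φ * (R * (R * (Sgb * (R * (R * Φᵀ))))) := by
      rw [hPA, ← hRR]
      simp only [Matrix.transpose_mul, Matrix.transpose_transpose, hR.eq, Matrix.mul_assoc]
      rw [hSgb' (R * (R * Φᵀ))]
    have hB : (Φ * R * Em) * Matrix.diagonal Lam * (Φ * R * Em)ᵀ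
        = Φ * (R * (R * (Sgb * (R * (R * Φᵀ))))) := by
      simp only [Matrix.transpose_mul, hR.eq, Matrix.mul_assoc]
      rw [hMm' (R * Φᵀ)]
    rw [hA, hB]
  have hQQ : (Φ * R * Em)ᵀ * (Φ * R * Em) = 1 := by
    have hSgm' : ∀ Z : Matrix (Fin D) (Fin D) ℝ, Φᵀ * (Φ * Z) = Sgm * Z := by
      intro Z
      rw [← Matrix.mul_assoc, ← hSgmeq]
    have hRSR' : ∀ Z : Matrix (Fin D) (Fin D) ℝ, R * (Sgm * (R * Z)) = Z := by
      intro Z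
      have h := congrArg (fun M => M * Z) hRSR
      simpa only [Matrix.mul_assoc, Matrix.one_mul] using h
    simp only [Matrix.transpose_mul, hR.eq, Matrix.mul_assoc]
    rw [hSgm' (R * Em), hRSR' Em, hEE]
  -- the SVD side
  set U : Matrix X (Fin k) ℝ := Matrix.of (fun x b => u (b.1 + 1) x) with hUdef
  set Gam : Fin k → ℝ := (fun b => γ (b.1 + 1)) with hGamdef
  have hmemk : ∀ b : Fin k, b.1 + 1 ∈ Finset.Icc 1 k := by
    intro b
    simp only [Finset.mem_Icc]
    exact ⟨Nat.le_add_left 1 b.1, b.isLt⟩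
  have hUU : Uᵀ * U = 1 := by
    ext b b'
    rw [Matrix.mul_apply]
    simp only [hUdef, Matrix.transpose_apply, Matrix.of_apply]
    rw [hu (b.1 + 1) (hmemk b) (b'.1 + 1) (hmemk b')]
    by_cases h : b = b'
    · subst h; simp [Matrix.one_apply]
    · have : ¬ (b.1 + 1 = b'.1 + 1) := by
        simp only [add_left_inj]
        exact fun hc => h (Fin.ext hc)
      simp [Matrix.one_apply, h, this, Fin.val_inj]
  have hs2 : (P * (AbarN wb wc)ᵀ) * (P * (AbarN wb wc)ᵀ)ᵀ
      = U * Matrix.diagonal Gam * Uᵀ := by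
    ext x y
    rw [Matrix.mul_apply]
    have hIccsub : Finset.Icc 1 k ⊆ Finset.Icc 1 (Fintype.card Xb) :=
      Finset.Icc_subset_Icc_right hXcard
    calc ∑ xb, (P * (AbarN wb wc)ᵀ) x xb * ((P * (AbarN wb wc)ᵀ)ᵀ) xb y
        = ∑ xb, (∑ i ∈ Finset.Icc 1 k, Real.sqrt (γ i) * u i x * v i xb) *
            (∑ j ∈ Finset.Icc 1 k, Real.sqrt (γ j) * u j y * v j xb) := by
          refine Finset.sum_congr rfl fun xb _ => ?_
          rw [Matrix.transpose_apply, hsvd x xb, hsvd y xb]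
      _ = ∑ i ∈ Finset.Icc 1 k, ∑ j ∈ Finset.Icc 1 k,
            (Real.sqrt (γ i) * u i x * (Real.sqrt (γ j) * u j y)) *
              ∑ xb, v i xb * v j xb := by
          rw [Finset.sum_congr rfl fun xb _ => Finset.sum_mul_sum
            (Finset.Icc 1 k) (Finset.Icc 1 k)
            (fun i => Real.sqrt (γ i) * u i x * v i xb)
            (fun j => Real.sqrt (γ j) * u j y * v j xb)]
          rw [Finset.sum_comm]
          refine Finset.sum_congr rfl fun i _ => ?_
          rw [Finset.sum_comm]
          refine Finset.sum_congr rfl fun j _ => ?_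
          rw [Finset.mul_sum]
          refine Finset.sum_congr rfl fun xb _ => ?_
          ring
      _ = ∑ i ∈ Finset.Icc 1 k,
            Real.sqrt (γ i) * u i x * (Real.sqrt (γ i) * u i y) := by
          refine Finset.sum_congr rfl fun i hi => ?_
          rw [Finset.sum_eq_single i]
          · rw [hv i (hIccsub hi) i (hIccsub hi), if_pos rfl, mul_one]
          · intro j hj hne
            rw [hv i (hIccsub hi) j (hIccsub hj), if_neg (fun hc => hne hc.symm), mul_zero]
          · intro hni
            exact absurd hi hni
      _ = ∑ b : Fin k, Real.sqrt (γ (b.1 + 1)) * u (b.1 + 1) x *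
            (Real.sqrt (γ (b.1 + 1)) * u (b.1 + 1) y) :=
          my_sum_Icc_one k _
      _ = (U * Matrix.diagonal Gam * Uᵀ) x y := by
          rw [Matrix.mul_apply]
          refine (Finset.sum_congr rfl fun b _ => ?_).symm
          rw [Matrix.mul_diagonal, Matrix.transpose_apply]
          simp only [hUdef, hGamdef, Matrix.of_apply]
          have hγs : Real.sqrt (γ (b.1 + 1)) * Real.sqrt (γ (b.1 + 1)) = γ (b.1 + 1) :=
            Real.mul_self_sqrt (hγnonneg _)
          linear_combination (-(u (b.1 + 1) x * u (b.1 + 1) y)) * hγs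
  -- characteristic polynomial comparison
  have c1 : ((P * (AbarN wb wc)ᵀ) * (P * (AbarN wb wc)ᵀ)ᵀ).charpoly * (Polynomial.X : (Polynomial ℝ)) ^ D
      = (Matrix.diagonal Lam).charpoly * (Polynomial.X : (Polynomial ℝ)) ^ (Fintype.card X) := by
    have h := my_charpoly_mul_comm_rect ((Φ * R * Em) * Matrix.diagonal Lam) ((Φ * R * Em)ᵀ)
    rw [Fintype.card_fin] at h
    have hA : (Φ * R * Em) * Matrix.diagonal Lam * (Φ * R * Em)ᵀ
        = (P * (AbarN wb wc)ᵀ) * (P * (AbarN wb wc)ᵀ)ᵀ := hs1.symm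
    have hB : (Φ * R * Em)ᵀ * ((Φ * R * Em) * Matrix.diagonal Lam) = Matrix.diagonal Lam := by
      rw [← Matrix.mul_assoc, hQQ, Matrix.one_mul]
    rw [hA, hB] at h
    exact h
  have c2 : ((P * (AbarN wb wc)ᵀ) * (P * (AbarN wb wc)ᵀ)ᵀ).charpoly * (Polynomial.X : (Polynomial ℝ)) ^ k
      = (Matrix.diagonal Gam).charpoly * (Polynomial.X : (Polynomial ℝ)) ^ (Fintype.card X) := by
    have h := my_charpoly_mul_comm_rect (U * Matrix.diagonal Gam) (Uᵀ)
    rw [Fintype.card_fin] at h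
    have hA : U * Matrix.diagonal Gam * Uᵀ
        = (P * (AbarN wb wc)ᵀ) * (P * (AbarN wb wc)ᵀ)ᵀ := hs2.symm
    have hB : Uᵀ * (U * Matrix.diagonal Gam) = Matrix.diagonal Gam := by
      rw [← Matrix.mul_assoc, hUU, Matrix.one_mul]
    rw [hA, hB] at h
    exact h
  have hpoly : (∏ b : Fin D, ((Polynomial.X : (Polynomial ℝ)) - Polynomial.C (Lam b))) * (Polynomial.X : (Polynomial ℝ)) ^ k
      = (∏ b : Fin k, ((Polynomial.X : (Polynomial ℝ)) - Polynomial.C (Gam b))) * (Polynomial.X : (Polynomial ℝ)) ^ D := by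
    have hXn : (Polynomial.X : (Polynomial ℝ)) ^ (Fintype.card X) ≠ 0 := pow_ne_zero _ Polynomial.X_ne_zero
    rw [← my_charpoly_diagonal Lam, ← my_charpoly_diagonal Gam]
    apply mul_right_cancel₀ hXn
    calc (Matrix.diagonal Lam).charpoly * (Polynomial.X : (Polynomial ℝ)) ^ k * (Polynomial.X : (Polynomial ℝ)) ^ (Fintype.card X)
        = ((Matrix.diagonal Lam).charpoly * (Polynomial.X : (Polynomial ℝ)) ^ (Fintype.card X)) * (Polynomial.X : (Polynomial ℝ)) ^ k := by ring
      _ = (((P * (AbarN wb wc)ᵀ) * (P * (AbarN wb wc)ᵀ)ᵀ).charpoly * (Polynomial.X : (Polynomial ℝ)) ^ D) * (Polynomial.X : (Polynomial ℝ)) ^ k := by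
          rw [c1]
      _ = (((P * (AbarN wb wc)ᵀ) * (P * (AbarN wb wc)ᵀ)ᵀ).charpoly * (Polynomial.X : (Polynomial ℝ)) ^ k) * (Polynomial.X : (Polynomial ℝ)) ^ D := by
          ring
      _ = ((Matrix.diagonal Gam).charpoly * (Polynomial.X : (Polynomial ℝ)) ^ (Fintype.card X)) * (Polynomial.X : (Polynomial ℝ)) ^ D := by rw [c2]
      _ = (Matrix.diagonal Gam).charpoly * (Polynomial.X : (Polynomial ℝ)) ^ D * (Polynomial.X : (Polynomial ℝ)) ^ (Fintype.card X) := by ring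
  -- multiset equality
  have hperm : ((((List.finRange D).map Lam) ++ List.replicate k 0 : List ℝ) : Multiset ℝ)
      = ((((List.finRange k).map Gam) ++ List.replicate D 0 : List ℝ) : Multiset ℝ) := by
    have h1 := my_prod_pad D k Lam
    have h2 := my_prod_pad k D Gam
    have h3 : (((((List.finRange D).map Lam) ++ List.replicate k 0 : List ℝ) : Multiset ℝ).map
        (fun a => (Polynomial.X : (Polynomial ℝ)) - Polynomial.C a)).prod
        = (((((List.finRange k).map Gam) ++ List.replicate D 0 : List ℝ) : Multiset ℝ).map
        (fun a => (Polynomial.X : (Polynomial ℝ)) - Polynomial.C a)).prod := by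
      rw [h1, h2, hpoly]
    have h4 := congrArg Polynomial.roots h3
    rwa [Polynomial.roots_multiset_prod_X_sub_C, Polynomial.roots_multiset_prod_X_sub_C] at h4
  -- positive semidefiniteness: 1 - lam i ≥ 0
  have hLam0 : ∀ i ∈ Finset.Icc 1 D, 0 ≤ 1 - lam i := by
    intro i hi
    have h1 : (R * Sgb * R) *ᵥ e i = (1 - lam i) • e i := hMe i hi
    have hee : dotProduct (e i) (e i) = 1 := by
      have h := he i hi i hi
      simpa [dotProduct] using h
    have h2 : dotProduct (e i) ((R * Sgb * R) *ᵥ e i) = 1 - lam i := by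
      rw [h1, dotProduct_smul, smul_eq_mul, hee, mul_one]
    rw [← h2]
    have h3 : (R * Sgb * R) *ᵥ e i = R *ᵥ (Φbᵀ *ᵥ (Φb *ᵥ (R *ᵥ e i))) := by
      rw [Matrix.mulVec_mulVec, Matrix.mulVec_mulVec, Matrix.mulVec_mulVec]
      congr 1
      rw [hSgbeq]
      simp only [Matrix.mul_assoc]
    rw [h3, Matrix.dotProduct_mulVec]
    have h4 : Matrix.vecMul (e i) R = R *ᵥ e i := by
      rw [← Matrix.mulVec_transpose, hR.eq]
    rw [h4, Matrix.dotProduct_mulVec, Matrix.vecMul_transpose]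
    unfold dotProduct
    exact Finset.sum_nonneg fun xb _ => mul_self_nonneg _
  -- sortedness
  have hsorted1 : (((List.finRange D).map Lam) ++ List.replicate k 0 : List ℝ).Pairwise (· ≥ ·) := by
    rw [List.pairwise_append]
    refine ⟨?_, ?_, ?_⟩
    · rw [List.pairwise_map]
      refine List.Pairwise.imp ?_ (List.pairwise_lt_finRange D)
      intro a b hab
      have h := hlammono (a.1 + 1) (b.1 + 1) (Nat.le_add_left 1 a.1)
        (by omega) b.isLt
      simp only [hLamdef, ge_iff_le]
      linarith
    · rw [List.pairwise_replicate]
      exact Or.inr le_rfl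
    · intro a ha b hb
      rw [List.mem_replicate] at hb
      rw [List.mem_map] at ha
      obtain ⟨c, _, hc⟩ := ha
      rw [hb.2, ← hc]
      simp only [hLamdef]
      exact hLam0 (c.1 + 1) (hmemD c)
  have hsorted2 : (((List.finRange k).map Gam) ++ List.replicate D 0 : List ℝ).Pairwise (· ≥ ·) := by
    rw [List.pairwise_append]
    refine ⟨?_, ?_, ?_⟩
    · rw [List.pairwise_map]
      refine List.Pairwise.imp ?_ (List.pairwise_lt_finRange k)
      intro a b hab
      exact hγmono (a.1 + 1) (b.1 + 1) (Nat.le_add_left 1 a.1) (by omega)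
    · rw [List.pairwise_replicate]
      exact Or.inr le_rfl
    · intro a ha b hb
      rw [List.mem_replicate] at hb
      rw [List.mem_map] at ha
      obtain ⟨c, _, hc⟩ := ha
      rw [hb.2, ← hc]
      exact hγnonneg _
  have hL12 : (((List.finRange D).map Lam) ++ List.replicate k 0 : List ℝ)
      = (((List.finRange k).map Gam) ++ List.replicate D 0 : List ℝ) :=
    List.Perm.eq_of_pairwise' hsorted1 hsorted2 (Multiset.coe_eq_coe.mp hperm)
  -- extraction
  intro i hi
  rw [Finset.mem_Icc] at hi
  obtain ⟨hi1, hi2⟩ := hi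
  have hjD : i - 1 < D := by omega
  have hp1 : i - 1 < D + k := by omega
  have hp2 : i - 1 < k + D := by omega
  have e1 := my_getElem_pad Lam (i - 1) hp1
  have e2 := my_getElem_pad Gam (i - 1) hp2
  have egets : (((List.finRange D).map Lam) ++ List.replicate k 0 : List ℝ)[i-1]'(by
        simp only [List.length_append, List.length_map, List.length_finRange,
          List.length_replicate]
        omega)
      = (((List.finRange k).map Gam) ++ List.replicate D 0 : List ℝ)[i-1]'(by
        simp only [List.length_append, List.length_map, List.length_finRange,
          List.length_replicate]
        omega) :=
    List.getElem_of_eq hL12 _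
  rw [e1, e2, dif_pos hjD] at egets
  have hii : i - 1 + 1 = i := by omega
  by_cases hik : i - 1 < k
  · rw [dif_pos hik] at egets
    simp only [hLamdef, hGamdef] at egets
    rw [hii] at egets
    linarith [egets]
  · rw [dif_neg hik] at egets
    simp only [hLamdef] at egets
    rw [hii] at egets
    have hγ0 : γ i = 0 := hγpad i (by omega)
    rw [hγ0]
    linarith [egets]
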